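/- For a finite irreducible Markov chain, the derivative of the average reward with respect to a perturbation direction of the transition matrix is given by the performance derivative formula: if P(θ) = P + θ Δ is stochastic and irreducible for θ in a neighborhood of 0 (so Δ has zero row sums), then d/dθ η(θ)|_{θ=0} = π Δ g, where π is the stationary distribution of P, g solves the Poisson equation (I - P) g + η 1 = f, and η(θ) is the average reward of P(θ) with fixed reward f. -/

import Mathlib

open Filter Topology

section aux
variable {S : Type*} [Fintype S] [DecidableEq S]

lemma pdf_pow_nonneg (P : Matrix S S ℝ)
    (h : ∀ i j, 0 ≤ P i j) : ∀ n i j, 0 ≤ (P ^ n) i j := by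
  intro n
  induction n with
  | zero => intro i j; simp [Matrix.one_apply]; positivity
  | succ n ih =>
    intro i j
    rw [pow_succ, Matrix.mul_apply]
    exact Finset.sum_nonneg fun k _ => mul_nonneg (ih i k) (h k j)

lemma pdf_stat_pow (P : Matrix S S ℝ) (μ : S → ℝ)
    (h : ∀ j, ∑ i, μ i * P i j = μ j) :
    ∀ n j, ∑ i, μ i * (P ^ n) i j = μ j := by
  intro n
  induction n with
  | zero => intro j; simp [Matrix.one_apply, Finset.sum_ite_eq]
  | succ n ih =>
    intro j
    have : ∑ i, μ i * (P ^ (n+1)) i j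
        = ∑ k, (∑ i, μ i * (P ^ n) i k) * P k j := by
      simp only [pow_succ, Matrix.mul_apply, Finset.mul_sum, Finset.sum_mul]
      rw [Finset.sum_comm]
      congr 1; ext i; congr 1; ext k; ring
    rw [this]
    simp only [ih]
    exact h j

lemma pdf_stat_pos [Nonempty S] (P : Matrix S S ℝ)
    (hPnn : ∀ i j, 0 ≤ P i j) (hPirr : ∀ i j, ∃ n : ℕ, 0 < (P ^ n) i j)
    (μ : S → ℝ) (hnn : ∀ i, 0 ≤ μ i) (hsum : ∑ i, μ i = 1)
    (hstat : ∀ j, ∑ i, μ i * P i j = μ j) : ∀ j, 0 < μ j := by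
  obtain ⟨i, hi⟩ : ∃ i, 0 < μ i := by
    by_contra hc
    push_neg at hc
    have : ∑ i, μ i = 0 := le_antisymm (Finset.sum_nonpos fun i _ => hc i)
      (Finset.sum_nonneg fun i _ => hnn i)
    rw [hsum] at this; norm_num at this
  intro j
  obtain ⟨n, hn⟩ := hPirr i j
  have h1 : μ i * (P ^ n) i j ≤ ∑ k, μ k * (P ^ n) k j :=
    Finset.single_le_sum (fun k _ => mul_nonneg (hnn k) (pdf_pow_nonneg P hPnn n k j))
      (Finset.mem_univ i)
  rw [pdf_stat_pow P μ hstat n j] at h1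
  exact lt_of_lt_of_le (mul_pos hi hn) h1

lemma pdf_stat_unique [Nonempty S] (P : Matrix S S ℝ)
    (hPnn : ∀ i j, 0 ≤ P i j) (hPirr : ∀ i j, ∃ n : ℕ, 0 < (P ^ n) i j)
    (μ ρ : S → ℝ)
    (hμsum : ∑ i, μ i = 1) (hμstat : ∀ j, ∑ i, μ i * P i j = μ j)
    (hρnn : ∀ i, 0 ≤ ρ i) (hρsum : ∑ i, ρ i = 1) (hρstat : ∀ j, ∑ i, ρ i * P i j = ρ j) :
    μ = ρ := by
  have hρpos := pdf_stat_pos P hPnn hPirr ρ hρnn hρsum hρstat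
  obtain ⟨i0, -, hi0⟩ := Finset.exists_min_image Finset.univ (fun i => μ i / ρ i)
    Finset.univ_nonempty
  set t := μ i0 / ρ i0 with ht
  set ν : S → ℝ := fun i => μ i - t * ρ i with hν
  have hνnn : ∀ i, 0 ≤ ν i := by
    intro i
    have := hi0 i (Finset.mem_univ i)
    have h2 : t * ρ i ≤ μ i := (le_div_iff₀ (hρpos i)).mp this
    simp [hν]; linarith
  have hνstat : ∀ j, ∑ i, ν i * P i j = ν j := by
    intro j
    simp only [hν, sub_mul, Finset.sum_sub_distrib, mul_assoc, ← Finset.mul_sum]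
    rw [hμstat, hρstat]
  have hνi0 : ν i0 = 0 := by
    simp [hν, ht, div_mul_cancel₀ _ (ne_of_gt (hρpos i0))]
  have hνzero : ∀ i, ν i = 0 := by
    intro i
    obtain ⟨n, hn⟩ := hPirr i i0
    have hsum0 : ∑ k, ν k * (P ^ n) k i0 = 0 := by
      rw [pdf_stat_pow P ν hνstat n i0, hνi0]
    have := (Finset.sum_eq_zero_iff_of_nonneg
      (fun k _ => mul_nonneg (hνnn k) (pdf_pow_nonneg P hPnn n k i0))).mp hsum0
      i (Finset.mem_univ i)
    rcases mul_eq_zero.mp this with h | h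
    · exact h
    · exact absurd h (ne_of_gt hn)
  have hμeq : ∀ i, μ i = t * ρ i := by
    intro i; have := hνzero i; simp [hν] at this; linarith
  have ht1 : t = 1 := by
    have : ∑ i, μ i = t * ∑ i, ρ i := by
      rw [Finset.mul_sum]; exact Finset.sum_congr rfl fun i _ => hμeq i
    rw [hμsum, hρsum, mul_one] at this; linarith
  funext i
  rw [hμeq i, ht1, one_mul]

end aux

/-- Performance derivative formula (perturbation analysis, Cao): if
P(θ) = P + θΔ is stochastic and irreducible for θ near 0 (Δ with zero row
sums), with stationary distributions π(θ) and average reward η(θ) = π(θ) f,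
then d/dθ η(θ)|₀ = π Δ g, where g solves (I - P) g + η·1 = f. -/
theorem performance_derivative_formula
    {S : Type*} [Fintype S] [DecidableEq S] [Nonempty S]
    (P Δ : Matrix S S ℝ)
    (hPnn : ∀ i j, 0 ≤ P i j) (hProw : ∀ i, ∑ j, P i j = 1)
    (hPirr : ∀ i j, ∃ n : ℕ, 0 < (P ^ n) i j)
    (hΔrow : ∀ i, ∑ j, Δ i j = 0)
    (f g : S → ℝ) (π : S → ℝ) (η : ℝ)
    (hπnn : ∀ i, 0 ≤ π i) (hπsum : ∑ i, π i = 1)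
    (hπstat : ∀ j, ∑ i, π i * P i j = π j)
    (hη : η = ∑ s, π s * f s)
    (hpoisson : ∀ s, (g s - ∑ s', P s s' * g s') + η = f s)
    (ε : ℝ) (hε : 0 < ε)
    (πθ : ℝ → S → ℝ)
    (hθ : ∀ θ : ℝ, |θ| < ε →
      (∀ i j, 0 ≤ P i j + θ * Δ i j) ∧
      (∀ i j, ∃ n : ℕ, 0 < ((P + θ • Δ) ^ n) i j) ∧
      (∀ i, 0 ≤ πθ θ i) ∧ (∑ i, πθ θ i = 1) ∧
      (∀ j, ∑ i, πθ θ i * (P i j + θ * Δ i j) = πθ θ j))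
    (hθ0 : πθ 0 = π) :
    HasDerivAt (fun θ : ℝ => ∑ s, πθ θ s * f s)
      (∑ s, ∑ s', π s * Δ s s' * g s') 0 := by
  -- the compact set of probability vectors
  set K : Set (S → ℝ) := {v | (∀ i, 0 ≤ v i) ∧ ∑ i, v i = 1} with hK
  have hKclosed : IsClosed K := by
    have : K = (⋂ i, {v : S → ℝ | 0 ≤ v i}) ∩ {v : S → ℝ | ∑ i, v i = 1} := by
      ext v; simp [hK, Set.mem_iInter]
    rw [this]
    exact (isClosed_iInter fun i =>
        isClosed_le continuous_const (continuous_apply i)).inter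
      (isClosed_eq (continuous_finset_sum _ fun i _ => continuous_apply i) continuous_const)
  have hKc : IsCompact K := by
    apply (isCompact_univ_pi fun _ : S => isCompact_Icc (a := (0:ℝ)) (b := 1)).of_isClosed_subset
      hKclosed
    intro v hv
    rw [Set.mem_univ_pi]
    intro i
    refine ⟨hv.1 i, ?_⟩
    calc v i ≤ ∑ j, v j := Finset.single_le_sum (fun j _ => hv.1 j) (Finset.mem_univ i)
    _ = 1 := hv.2
  -- membership eventually
  have hevε : ∀ᶠ θ in 𝓝 (0:ℝ), |θ| < ε := by
    have := Metric.ball_mem_nhds (0:ℝ) hε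
    filter_upwards [this] with θ h
    simpa [Real.dist_eq] using h
  have hevε' : ∀ᶠ θ in 𝓝[≠] (0:ℝ), |θ| < ε := nhdsWithin_le_nhds hevε
  -- continuity of πθ at 0 (within punctured neighborhood)
  have htend : Tendsto πθ (𝓝[≠] (0:ℝ)) (𝓝 π) := by
    rw [tendsto_iff_ultrafilter]
    intro u hu
    have hu0 : Tendsto (fun θ : ℝ => θ) u (𝓝 0) := le_trans hu nhdsWithin_le_nhds
    have huε : ∀ᶠ θ in u, |θ| < ε := hu hevε'
    have hmem : ∀ᶠ θ in u, πθ θ ∈ K := by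
      filter_upwards [huε] with θ h
      exact ⟨(hθ θ h).2.2.1, (hθ θ h).2.2.2.1⟩
    obtain ⟨v, hvK, hv⟩ := hKc.ultrafilter_le_nhds (Ultrafilter.map πθ u)
      (le_principal_iff.2 (mem_map.2 hmem))
    have hvt : Tendsto πθ u (𝓝 v) := hv
    have hcoord : ∀ i, Tendsto (fun θ => πθ θ i) u (𝓝 (v i)) :=
      fun i => (tendsto_pi_nhds.mp hvt) i
    have hvstat : ∀ j, ∑ i, v i * P i j = v j := by
      intro j
      have t2 : Tendsto (fun θ => ∑ i, πθ θ i * (P i j + θ * Δ i j)) u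
          (𝓝 (∑ i, v i * (P i j + 0 * Δ i j))) :=
        tendsto_finset_sum _ fun i _ =>
          (hcoord i).mul (tendsto_const_nhds.add (hu0.mul tendsto_const_nhds))
      have heq : (fun θ => ∑ i, πθ θ i * (P i j + θ * Δ i j)) =ᶠ[u]
          (fun θ => πθ θ j) := by
        filter_upwards [huε] with θ h
        exact (hθ θ h).2.2.2.2 j
      have t2' := t2.congr' heq
      have := tendsto_nhds_unique t2' (hcoord j)
      simpa using this
    have hvπ : v = π := pdf_stat_unique P hPnn hPirr v π hvK.2 hvstat hπnn hπsum hπstat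
    rw [hvπ] at hvt
    exact hvt
  -- algebraic identity
  have key : ∀ θ : ℝ, |θ| < ε → ∑ s, πθ θ s * f s
      = η + θ * ∑ s, ∑ s', πθ θ s * Δ s s' * g s' := by
    intro θ hlt
    obtain ⟨-, -, -, hsum1, hstat⟩ := hθ θ hlt
    have hPpart : ∀ s', ∑ s, πθ θ s * P s s'
        = πθ θ s' - θ * ∑ s, πθ θ s * Δ s s' := by
      intro s'
      have h1 := hstat s'
      have h2 : ∑ s, πθ θ s * (P s s' + θ * Δ s s')
          = ∑ s, πθ θ s * P s s' + θ * ∑ s, πθ θ s * Δ s s' := by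
        rw [Finset.mul_sum, ← Finset.sum_add_distrib]
        congr 1; ext s; ring
      rw [h2] at h1; linarith
    have hηterm : ∑ s, πθ θ s * η = η := by
      rw [← Finset.sum_mul, hsum1, one_mul]
    calc ∑ s, πθ θ s * f s
        = ∑ s, πθ θ s * ((g s - ∑ s', P s s' * g s') + η) :=
          Finset.sum_congr rfl fun s _ => by rw [hpoisson s]
      _ = (∑ s, πθ θ s * g s) - (∑ s, ∑ s', πθ θ s * (P s s' * g s')) + η := by
          simp only [mul_add, mul_sub, Finset.sum_add_distrib, Finset.sum_sub_distrib,
            Finset.mul_sum, hηterm]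
      _ = (∑ s, πθ θ s * g s) - (∑ s', (∑ s, πθ θ s * P s s') * g s') + η := by
          rw [Finset.sum_comm]
          congr 2
          exact Finset.sum_congr rfl fun s' _ => by
            rw [Finset.sum_mul]
            exact Finset.sum_congr rfl fun s _ => by ring
      _ = (∑ s, πθ θ s * g s)
            - (∑ s', (πθ θ s' - θ * ∑ s, πθ θ s * Δ s s') * g s') + η := by
          simp only [hPpart]
      _ = η + θ * ∑ s', (∑ s, πθ θ s * Δ s s') * g s' := by
          have h3 : ∑ s', (θ * ∑ s, πθ θ s * Δ s s') * g s'
              = θ * ∑ s', (∑ s, πθ θ s * Δ s s') * g s' := by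
            rw [Finset.mul_sum]
            exact Finset.sum_congr rfl fun s' _ => by ring
          simp only [sub_mul, Finset.sum_sub_distrib, h3]
          ring
      _ = η + θ * ∑ s, ∑ s', πθ θ s * Δ s s' * g s' := by
          congr 1
          congr 1
          simp only [Finset.sum_mul]
          rw [Finset.sum_comm]
  -- derivative via slope
  have h0 : (∑ s, πθ 0 s * f s) = η := by rw [hθ0, hη]
  have hD : Tendsto (fun θ => ∑ s, ∑ s', πθ θ s * Δ s s' * g s') (𝓝[≠] (0:ℝ))
      (𝓝 (∑ s, ∑ s', π s * Δ s s' * g s')) :=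
    tendsto_finset_sum _ fun s _ => tendsto_finset_sum _ fun s' _ =>
      (((tendsto_pi_nhds.mp htend) s).mul tendsto_const_nhds).mul tendsto_const_nhds
  rw [hasDerivAt_iff_tendsto_slope]
  have heq : (fun θ => ∑ s, ∑ s', πθ θ s * Δ s s' * g s') =ᶠ[𝓝[≠] (0:ℝ)]
      slope (fun θ : ℝ => ∑ s, πθ θ s * f s) 0 := by
    filter_upwards [hevε', self_mem_nhdsWithin] with θ h1 h2
    have hθne : θ ≠ 0 := h2
    rw [slope_def_field, key θ h1, h0]
    field_simp
    ring
  exact Tendsto.congr' heq hD
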